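/- Let Y be a real Banach space, τ > 0, λ : ℝ → ℝ continuously differentiable with λ(0) ≠ 0, and φ : ℝ → Y continuous. Define y(t) = ∫_0^t λ(t-s) φ(s) ds. Then y is differentiable on ℝ and (∫_0^τ ‖y'(t)‖² dt)^{1/2} ≥ (|λ(0)| / √2) · exp( −τ · (∫_0^τ λ'(t)² dt) / λ(0)² ) · (∫_0^τ ‖φ(t)‖² dt)^{1/2}. -/

import Mathlib

open MeasureTheory intervalIntegral


lemma volterra_hasDerivAt {Y : Type*} [NormedAddCommGroup Y] [NormedSpace ℝ Y] [CompleteSpace Y]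
    (lam : ℝ → ℝ) (hlam : ContDiff ℝ 1 lam) (φ : ℝ → Y) (hφ : Continuous φ) (t₀ : ℝ) :
    HasDerivAt (fun t => ∫ s in (0:ℝ)..t, lam (t - s) • φ s)
      (lam 0 • φ t₀ + ∫ s in (0:ℝ)..t₀, deriv lam (t₀ - s) • φ s) t₀ := by
  have hlamc : Continuous lam := hlam.continuous
  have hdl : Continuous (deriv lam) := hlam.continuous_deriv le_rfl
  have hgc : ∀ x : ℝ, Continuous fun s => lam (x - s) • φ s := fun x =>
    (hlamc.comp (continuous_const.sub continuous_id)).smul hφ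
  obtain ⟨M, hM⟩ : ∃ M, ∀ u ∈ Set.Icc (-(|t₀| + |t₀| + 1)) (|t₀| + |t₀| + 1), |deriv lam u| ≤ M := by
    obtain ⟨M, hM⟩ := isCompact_Icc.exists_bound_of_continuousOn
      (s := Set.Icc (-(|t₀| + |t₀| + 1)) (|t₀| + |t₀| + 1)) hdl.continuousOn
    exact ⟨M, fun u hu => by simpa [Real.norm_eq_abs] using hM u hu⟩
  have hP : HasDerivAt (fun x => ∫ s in (0:ℝ)..t₀, lam (x - s) • φ s)
      (∫ s in (0:ℝ)..t₀, deriv lam (t₀ - s) • φ s) t₀ := by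
    have hsub : ∀ s : ℝ, s ∈ Set.uIoc (0:ℝ) t₀ → |s| ≤ |t₀| := by
      intro s hs
      rcases Set.mem_uIoc.1 hs with ⟨h1, h2⟩ | ⟨h1, h2⟩ <;>
        rw [abs_le] <;> constructor <;> linarith [le_abs_self t₀, neg_abs_le t₀]
    refine (intervalIntegral.hasDerivAt_integral_of_dominated_loc_of_deriv_le
      (F := fun x s => lam (x - s) • φ s) (F' := fun x s => deriv lam (x - s) • φ s)
      (x₀ := t₀) (a := 0) (b := t₀) (bound := fun s => M * ‖φ s‖) (Metric.ball_mem_nhds t₀ zero_lt_one)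
      ?_ ?_ ?_ ?_ ?_ ?_).2
    · filter_upwards with x using (hgc x).aestronglyMeasurable
    · exact (hgc t₀).intervalIntegrable _ _
    · exact (((hdl.comp (continuous_const.sub continuous_id)).smul hφ)).aestronglyMeasurable
    · filter_upwards with s
      intro hs x hx
      rw [norm_smul, Real.norm_eq_abs]
      have hsb := hsub s hs
      have hxb : |x - t₀| < 1 := by simpa [Real.dist_eq] using Metric.mem_ball.1 hx
      have hxs : |x - s| ≤ |t₀| + |t₀| + 1 := by
        have h1 : |x - s| ≤ |x - t₀| + |t₀ - s| := by
          simpa using abs_add_le (x - t₀) (t₀ - s)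
        have h2 : |t₀ - s| ≤ |t₀| + |s| := abs_sub _ _
        linarith
      have := hM (x - s) (by rw [Set.mem_Icc, ← abs_le]; exact hxs)
      exact mul_le_mul_of_nonneg_right this (norm_nonneg _)
    · exact (continuous_const.mul hφ.norm).intervalIntegrable _ _
    · filter_upwards with s
      intro hs x hx
      have h1 : HasDerivAt (fun x => lam (x - s)) (deriv lam (x - s)) x := by
        have h0 : HasDerivAt lam (deriv lam (x - s)) (x - s) :=
          ((hlam.differentiable one_ne_zero) (x - s)).hasDerivAt
        exact h0.comp_sub_const x s
      exact h1.smul_const (φ s)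
  have hR : HasDerivAt (fun x => ∫ s in t₀..x, lam (x - s) • φ s) (lam 0 • φ t₀) t₀ := by
    rw [hasDerivAt_iff_isLittleO, Asymptotics.isLittleO_iff]
    intro ε hε
    have hcont : ContinuousAt (fun p : ℝ × ℝ => lam (p.1 - p.2) • φ p.2) (t₀, t₀) :=
      ((hlamc.comp (continuous_fst.sub continuous_snd)).smul (hφ.comp continuous_snd)).continuousAt
    obtain ⟨δ, hδ, hδ'⟩ := Metric.continuousAt_iff.1 hcont ε hε
    have hev : ∀ᶠ x in nhds t₀, |x - t₀| < δ := by
      have := Metric.ball_mem_nhds t₀ hδ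
      filter_upwards [this] with x hx
      simpa [Real.dist_eq] using hx
    filter_upwards [hev] with x hx
    have hval : lam (t₀ - t₀) • φ t₀ = lam 0 • φ t₀ := by norm_num
    have hbd : ∀ s ∈ Set.uIoc t₀ x, ‖lam (x - s) • φ s - lam 0 • φ t₀‖ ≤ ε := by
      intro s hs
      have hsb : |s - t₀| ≤ |x - t₀| := by
        rcases Set.mem_uIoc.1 hs with ⟨h1, h2⟩ | ⟨h1, h2⟩ <;> rw [abs_le] <;>
          constructor <;> cases abs_le.1 (le_refl |x - t₀|) <;>
          linarith [le_abs_self (x - t₀), neg_abs_le (x - t₀)]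
      have : dist ((x, s) : ℝ × ℝ) (t₀, t₀) < δ := by
        rw [Prod.dist_eq, max_lt_iff]
        constructor
        · simpa [Real.dist_eq] using hx
        · rw [Real.dist_eq]; exact lt_of_le_of_lt hsb hx
      have := hδ' this
      rw [dist_eq_norm] at this
      simp only [hval] at this
      exact this.le
    have heq : (∫ s in t₀..x, lam (x - s) • φ s) - (∫ s in t₀..t₀, lam (t₀ - s) • φ s)
        - (x - t₀) • (lam 0 • φ t₀) = ∫ s in t₀..x, (lam (x - s) • φ s - lam 0 • φ t₀) := by
      rw [intervalIntegral.integral_sub ((hgc x).intervalIntegrable _ _)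
        (intervalIntegrable_const), intervalIntegral.integral_const,
        intervalIntegral.integral_same]
      ring_nf
      abel
    calc ‖(∫ s in t₀..x, lam (x - s) • φ s) - (∫ s in t₀..t₀, lam (t₀ - s) • φ s)
        - (x - t₀) • (lam 0 • φ t₀)‖
        = ‖∫ s in t₀..x, (lam (x - s) • φ s - lam 0 • φ t₀)‖ := by rw [heq]
      _ ≤ ε * |x - t₀| := intervalIntegral.norm_integral_le_of_norm_le_const hbd
      _ = ε * ‖x - t₀‖ := by rw [Real.norm_eq_abs]
  have key : (fun x => (∫ s in (0:ℝ)..t₀, lam (x - s) • φ s) + ∫ s in t₀..x, lam (x - s) • φ s)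
      = fun t => ∫ s in (0:ℝ)..t, lam (t - s) • φ s := by
    funext x
    exact intervalIntegral.integral_add_adjacent_intervals
      ((hgc x).intervalIntegrable _ _) ((hgc x).intervalIntegrable _ _)
  have h2 : HasDerivAt (fun x => (∫ s in (0:ℝ)..t₀, lam (x - s) • φ s) + ∫ s in t₀..x, lam (x - s) • φ s) _ t₀ := hP.add hR
  rw [key] at h2
  rw [add_comm] at h2
  exact h2


lemma cs_integral {f g : ℝ → ℝ} {t : ℝ} (ht : 0 ≤ t) (hf : Continuous f) (hg : Continuous g)
    (hf0 : ∀ s, 0 ≤ f s) (hg0 : ∀ s, 0 ≤ g s) :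
    ∫ s in (0:ℝ)..t, f s * g s
      ≤ Real.sqrt (∫ s in (0:ℝ)..t, f s ^ 2) * Real.sqrt (∫ s in (0:ℝ)..t, g s ^ 2) := by
  set A := ∫ s in (0:ℝ)..t, f s ^ 2 with hA'
  set B := ∫ s in (0:ℝ)..t, g s ^ 2 with hB'
  set C := ∫ s in (0:ℝ)..t, f s * g s with hC'
  have hA : 0 ≤ A := intervalIntegral.integral_nonneg ht fun s _ => sq_nonneg _
  have hB : 0 ≤ B := intervalIntegral.integral_nonneg ht fun s _ => sq_nonneg _
  have hC : 0 ≤ C := intervalIntegral.integral_nonneg ht fun s _ => mul_nonneg (hf0 s) (hg0 s)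
  have key : ∀ θ : ℝ, 0 ≤ A * (θ * θ) + -(2 * C) * θ + B := by
    intro θ
    have h0 : 0 ≤ ∫ s in (0:ℝ)..t, (θ * f s - g s) ^ 2 :=
      intervalIntegral.integral_nonneg ht fun _ _ => sq_nonneg _
    have hexp : (fun s => (θ * f s - g s) ^ 2)
        = fun s => (θ * θ) * f s ^ 2 + ((-(2 * θ)) * (f s * g s) + g s ^ 2) := by
      funext s; ring
    rw [hexp, intervalIntegral.integral_add, intervalIntegral.integral_add,
      intervalIntegral.integral_const_mul, intervalIntegral.integral_const_mul] at h0
    · rw [← hA', ← hB', ← hC'] at h0; nlinarith [h0]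
    · exact (continuous_const.mul (hf.mul hg)).intervalIntegrable _ _
    · exact (hg.pow 2).intervalIntegrable _ _
    · exact (continuous_const.mul (hf.pow 2)).intervalIntegrable _ _
    · exact ((continuous_const.mul (hf.mul hg)).add (hg.pow 2)).intervalIntegrable _ _
  have hd := discrim_le_zero key
  rw [discrim] at hd
  have hC2 : C ^ 2 ≤ A * B := by nlinarith [hd]
  calc C = Real.sqrt (C ^ 2) := (Real.sqrt_sq hC).symm
    _ ≤ Real.sqrt (A * B) := Real.sqrt_le_sqrt hC2
    _ = Real.sqrt A * Real.sqrt B := Real.sqrt_mul hA B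

set_option maxHeartbeats 2000000 in
/-- Explicit-constant lower bound of Theorem 4.1 of the paper (inequality (isp8)) for the
Volterra convolution `y(t) = ∫_0^t λ(t-s) φ(s) ds`: `y` is differentiable and
`(∫_0^τ ‖y'‖²)^{1/2} ≥ (|λ(0)|/√2) e^{-τ ∫_0^τ λ'² / λ(0)²} (∫_0^τ ‖φ‖²)^{1/2}`. -/
theorem stmt7 {Y : Type*} [NormedAddCommGroup Y] [NormedSpace ℝ Y] [CompleteSpace Y]
    (τ : ℝ) (hτ : 0 < τ)
    (lam : ℝ → ℝ) (hlam : ContDiff ℝ 1 lam) (hlam0 : lam 0 ≠ 0)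
    (φ : ℝ → Y) (hφ : Continuous φ)
    (y : ℝ → Y) (hy : ∀ t, y t = ∫ s in (0 : ℝ)..t, lam (t - s) • φ s) :
    Differentiable ℝ y ∧
    Real.sqrt (∫ t in (0 : ℝ)..τ, ‖deriv y t‖ ^ 2)
      ≥ (|lam 0| / Real.sqrt 2)
          * Real.exp (-(τ * (∫ t in (0 : ℝ)..τ, (deriv lam t) ^ 2) / (lam 0) ^ 2))
          * Real.sqrt (∫ t in (0 : ℝ)..τ, ‖φ t‖ ^ 2) := by
  have hdlc : Continuous (deriv lam) := hlam.continuous_deriv le_rfl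
  set w : ℝ → Y := fun t => ∫ s in (0:ℝ)..t, deriv lam (t - s) • φ s with hw
  have hyy : y = fun t => ∫ s in (0:ℝ)..t, lam (t - s) • φ s := funext hy
  have hdy : ∀ t, HasDerivAt y (lam 0 • φ t + w t) t := by
    intro t; rw [hyy]; exact volterra_hasDerivAt lam hlam φ hφ t
  have hdiff : Differentiable ℝ y := fun t => (hdy t).differentiableAt
  refine ⟨hdiff, ?_⟩
  have hderiv_eq : deriv y = fun t => lam 0 • φ t + w t := funext fun t => (hdy t).deriv
  have hwc : Continuous w := by
    apply intervalIntegral.continuous_parametric_intervalIntegral_of_continuous (μ := volume)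
      (f := fun x s => deriv lam (x - s) • φ s) ?_ continuous_id
    exact (hdlc.comp (continuous_fst.sub continuous_snd)).smul (hφ.comp continuous_snd)
  have hy'c : Continuous (deriv y) := by
    rw [hderiv_eq]; exact ((continuous_const.smul hφ)).add hwc
  set K := ∫ t in (0:ℝ)..τ, (deriv lam t) ^ 2 with hK
  have hK0 : 0 ≤ K := intervalIntegral.integral_nonneg hτ.le fun _ _ => sq_nonneg _
  have hl2 : 0 < (lam 0) ^ 2 := by positivity
  set F : ℝ → ℝ := fun t => ∫ s in (0:ℝ)..t, ‖φ s‖ ^ 2 with hF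
  have hFc : Continuous fun s : ℝ => ‖φ s‖ ^ 2 := hφ.norm.pow 2
  have hF0 : ∀ t, 0 ≤ t → 0 ≤ F t := fun t ht =>
    intervalIntegral.integral_nonneg ht fun _ _ => sq_nonneg _
  have hFd : ∀ t, HasDerivAt F (‖φ t‖ ^ 2) t := fun t =>
    intervalIntegral.integral_hasDerivAt_right (hFc.intervalIntegrable _ _)
      (hFc.stronglyMeasurableAtFilter _ _) hFc.continuousAt
  set a : ℝ → ℝ := fun t => ‖deriv y t‖ ^ 2 with ha
  have hac : Continuous a := hy'c.norm.pow 2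
  have ha0 : ∀ t, 0 ≤ a t := fun t => sq_nonneg _
  set A : ℝ → ℝ := fun t => ∫ s in (0:ℝ)..t, a s with hAdef
  have hAd : ∀ t, HasDerivAt A (a t) t := fun t =>
    intervalIntegral.integral_hasDerivAt_right (hac.intervalIntegrable _ _)
      (hac.stronglyMeasurableAtFilter _ _) hac.continuousAt
  -- bound on ‖w t‖²
  have hwb : ∀ t, 0 ≤ t → t ≤ τ → ‖w t‖ ^ 2 ≤ K * F t := by
    intro t ht0 htτ
    have h1 : ‖w t‖ ≤ ∫ s in (0:ℝ)..t, |deriv lam (t - s)| * ‖φ s‖ := by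
      refine (intervalIntegral.norm_integral_le_integral_norm ht0).trans_eq ?_
      apply intervalIntegral.integral_congr
      intro s _
      simp [norm_smul, Real.norm_eq_abs]
    have h2 : ∫ s in (0:ℝ)..t, |deriv lam (t - s)| * ‖φ s‖
        ≤ Real.sqrt (∫ s in (0:ℝ)..t, |deriv lam (t - s)| ^ 2)
          * Real.sqrt (∫ s in (0:ℝ)..t, ‖φ s‖ ^ 2) :=
      cs_integral ht0 ((hdlc.comp (continuous_const.sub continuous_id)).abs) hφ.norm
        (fun s => abs_nonneg _) (fun s => norm_nonneg _)
    have h3 : (∫ s in (0:ℝ)..t, |deriv lam (t - s)| ^ 2) = ∫ u in (0:ℝ)..t, (deriv lam u) ^ 2 := by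
      have := intervalIntegral.integral_comp_sub_left
        (a := (0:ℝ)) (b := t) (fun u => (deriv lam u) ^ 2) t
      simp only [sub_zero, sub_self] at this
      rw [← this]
      apply intervalIntegral.integral_congr
      intro s _
      simp [sq_abs]
    have h4 : (∫ u in (0:ℝ)..t, (deriv lam u) ^ 2) ≤ K := by
      rw [hK, ← intervalIntegral.integral_add_adjacent_intervals (a := (0:ℝ)) (b := t) (c := τ)
        (f := fun u => deriv lam u ^ 2)
        (((hdlc.pow 2)).intervalIntegrable _ _) (((hdlc.pow 2)).intervalIntegrable _ _)]
      have : 0 ≤ ∫ u in t..τ, (deriv lam u) ^ 2 :=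
        intervalIntegral.integral_nonneg htτ fun _ _ => sq_nonneg _
      linarith
    have h5 : ‖w t‖ ≤ Real.sqrt K * Real.sqrt (F t) := by
      refine (h1.trans h2).trans ?_
      rw [h3]
      exact mul_le_mul_of_nonneg_right (Real.sqrt_le_sqrt h4) (Real.sqrt_nonneg _)
    calc ‖w t‖ ^ 2 ≤ (Real.sqrt K * Real.sqrt (F t)) ^ 2 := by
          have := norm_nonneg (w t)
          nlinarith [h5]
      _ = K * F t := by
          rw [mul_pow, Real.sq_sqrt hK0, Real.sq_sqrt (hF0 t ht0)]
  -- pointwise differential inequality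
  have hpt : ∀ t, 0 ≤ t → t ≤ τ →
      (lam 0) ^ 2 * ‖φ t‖ ^ 2 ≤ 2 * a t + 2 * K * F t := by
    intro t ht0 htτ
    have h1 : lam 0 • φ t = deriv y t - w t := by
      rw [hderiv_eq]; simp
    have h2 : ‖lam 0 • φ t‖ ≤ ‖deriv y t‖ + ‖w t‖ := by
      rw [h1]; exact norm_sub_le _ _
    have h3 : ‖lam 0 • φ t‖ ^ 2 = (lam 0) ^ 2 * ‖φ t‖ ^ 2 := by
      rw [norm_smul, Real.norm_eq_abs, mul_pow, sq_abs]
    have h4 := hwb t ht0 htτ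
    have h5 : a t = ‖deriv y t‖ ^ 2 := rfl
    have h6 : ‖lam 0 • φ t‖ ^ 2 ≤ 2 * ‖deriv y t‖ ^ 2 + 2 * ‖w t‖ ^ 2 := by
      nlinarith [mul_self_le_mul_self (norm_nonneg (lam 0 • φ t)) h2,
        sq_nonneg (‖deriv y t‖ - ‖w t‖)]
    rw [← h3, h5]
    linarith
  -- Gronwall
  set C : ℝ := 2 * K / (lam 0) ^ 2 with hC
  have hC0 : 0 ≤ C := by positivity
  set H : ℝ → ℝ := fun t => Real.exp (-C * t) * F t - (2 / (lam 0) ^ 2) * A t with hH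
  have hHd : ∀ t, HasDerivAt H
      (Real.exp (-C * t) * (-C) * F t + Real.exp (-C * t) * ‖φ t‖ ^ 2
        - (2 / (lam 0) ^ 2) * a t) t := by
    intro t
    have hf : HasDerivAt (fun u : ℝ => -C * u) (-C) t := by
      simpa using (hasDerivAt_id t).const_mul (-C)
    have he : HasDerivAt (fun t => Real.exp (-C * t)) (Real.exp (-C * t) * (-C)) t := hf.exp
    exact ((he.mul (hFd t)).sub ((hAd t).const_mul (2 / (lam 0) ^ 2))).congr_deriv (by ring)
  have hH'le : ∀ t ∈ Set.Ioo (0:ℝ) τ, deriv H t ≤ 0 := by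
    intro t ht
    rw [(hHd t).deriv]
    have ht0 : (0:ℝ) ≤ t := ht.1.le
    have htτ : t ≤ τ := ht.2.le
    have hpt' := hpt t ht0 htτ
    have he0 : 0 < Real.exp (-C * t) := Real.exp_pos _
    have he1 : Real.exp (-C * t) ≤ 1 := by
      rw [← Real.exp_zero]
      apply Real.exp_le_exp.2
      nlinarith
    -- bracket := ‖φ t‖² - C * F t ≤ (2/l0²) a t
    have hbr : ‖φ t‖ ^ 2 - C * F t ≤ 2 / (lam 0) ^ 2 * a t := by
      have hne : ((lam 0) ^ 2 : ℝ) ≠ 0 := hl2.ne'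
      apply le_of_mul_le_mul_right _ hl2
      have e1 : (‖φ t‖ ^ 2 - C * F t) * (lam 0) ^ 2
          = (lam 0) ^ 2 * ‖φ t‖ ^ 2 - 2 * K * F t := by
        rw [hC]; field_simp
      have e2 : (2 / (lam 0) ^ 2 * a t) * (lam 0) ^ 2 = 2 * a t := by field_simp
      rw [e1, e2]
      linarith
    have hD0 : 0 ≤ (2 / (lam 0) ^ 2) * a t := by positivity
    have key : ∀ c e p f d : ℝ, 0 < e → e ≤ 1 → 0 ≤ d → p - c * f ≤ d →
        e * (-c) * f + e * p - d ≤ 0 := by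
      intro c e p f d h1 h2 h3 h4
      nlinarith [mul_le_mul_of_nonneg_left h4 h1.le, mul_le_mul_of_nonneg_right h2 h3]
    exact key C _ _ _ _ he0 he1 hD0 hbr
  have hmono : H τ ≤ H 0 := by
    have hanti : AntitoneOn H (Set.Icc 0 τ) := by
      apply antitoneOn_of_deriv_nonpos (convex_Icc 0 τ)
      · have hHdiff : Differentiable ℝ H := fun t => (hHd t).differentiableAt
        exact hHdiff.continuous.continuousOn
      · intro x _
        exact ((hHd x).differentiableAt).differentiableWithinAt
      · rwa [interior_Icc]
    exact hanti (Set.left_mem_Icc.2 hτ.le) (Set.right_mem_Icc.2 hτ.le) hτ.le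
  have hH0 : H 0 = 0 := by
    simp [hH, hF, hAdef]
  have hgron : Real.exp (-C * τ) * F τ ≤ (2 / (lam 0) ^ 2) * A τ := by
    have := hmono
    rw [hH0] at this
    simpa [hH, sub_nonpos] using this
  -- final assembly
  have hmain : ((lam 0) ^ 2 / 2) * Real.exp (-C * τ) * F τ ≤ A τ := by
    have h := mul_le_mul_of_nonneg_left hgron (le_of_lt (by positivity : (0:ℝ) < (lam 0) ^ 2 / 2))
    calc ((lam 0) ^ 2 / 2) * Real.exp (-C * τ) * F τ
        = ((lam 0) ^ 2 / 2) * (Real.exp (-C * τ) * F τ) := by ring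
      _ ≤ ((lam 0) ^ 2 / 2) * ((2 / (lam 0) ^ 2) * A τ) := h
      _ = A τ := by field_simp
  rw [ge_iff_le]
  have hrw : (|lam 0| / Real.sqrt 2) * Real.exp (-(τ * K / (lam 0) ^ 2)) * Real.sqrt (F τ)
      = Real.sqrt (((lam 0) ^ 2 / 2) * Real.exp (-C * τ) * F τ) := by
    rw [Real.sqrt_mul (by positivity) (F τ), Real.sqrt_mul (by positivity) (Real.exp _)]
    congr 1
    congr 1
    · rw [Real.sqrt_div (sq_nonneg (lam 0)), Real.sqrt_sq_eq_abs]
    · rw [← Real.exp_half]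
      congr 1
      rw [hC]
      field_simp
  rw [hrw]
  exact Real.sqrt_le_sqrt hmain
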